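/- Let a₁,…,a_m be nonzero pairwise distinct complex numbers and f(t) = (t−a₁)···(t−a_m). Then the map sending x⊗g(t) ∈ ñ₊ to (x⊗g(t) mod I(t), g(a₁)·x, …, g(a_m)·x) induces a Lie algebra isomorphism ñ₊/I(t·f) ≅ (ñ₊/I(t)) ⊕ g ⊕ ··· ⊕ g (m copies of g). -/

import Mathlib

/- Common framework for formalizing statements from
   "Irreducible modules over affine Kac–Moody algebras which are locally finite
    over the positive part" (Guo–Zhao).

   Conventions:
   * `g` is a finite-dimensional simple complex Lie algebra.
   * The loop algebra `g ⊗ ℂ[t,t⁻¹]` is modelled by the vector space `ℤ →₀ g`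
     (`Finsupp.single p x` corresponds to `x ⊗ tᵖ`).
   * The affine algebra `ĝ = g ⊗ ℂ[t,t⁻¹] ⊕ ℂK` is any Lie algebra equipped with
     an `AffineAlg` structure (a linear equivalence with `(ℤ →₀ g) × ℂ` fixing the
     bracket on generators, where `(0,1)` is the central element `K`).
   * Similarly `t̃g = ĝ ⊕ ℂd` is any Lie algebra with an `AffineAlgD` structure on
     `(ℤ →₀ g) × ℂ × ℂ`, where `(0,1,0) = K` and `(0,0,1) = d`.
   * The current algebra `g ⊗ ℂ[t]` is `Polynomial ℂ ⊗[ℂ] g`, and the positive part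
     `ñ₊ = (g ⊗ tℂ[t]) ⊕ (n₊ ⊗ 1)` is any Lie algebra `nt` with an `NtAlg` structure:
     an injective Lie algebra morphism into the current algebra with range `ñ₊`.
   * Induced modules are specified by structures that pin them down uniquely up to
     isomorphism (`IndModule` via the PBW description `ℂ[d] ⊗ M`, and universal
     properties for induction from `ñ₊`).
-/

open scoped TensorProduct
open Polynomial

noncomputable section

namespace AffinePaper

variable (g : Type) [LieRing g] [LieAlgebra ℂ g]

/-- The current algebra `g ⊗ ℂ[t]` is a complex Lie algebra. -/
instance : LieAlgebra ℂ (Polynomial ℂ ⊗[ℂ] g) where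
  lie_smul c x y := by
    rw [← algebraMap_smul (Polynomial ℂ) c y, ← algebraMap_smul (Polynomial ℂ) c ⁅x, y⁆]
    exact lie_smul (algebraMap ℂ (Polynomial ℂ) c) x y

/-- The weight space of `ad H` on `g` for a functional `α` on a subalgebra `H`. -/
def wtSpace (H : LieSubalgebra ℂ g) (α : Module.Dual ℂ H) : Submodule ℂ g where
  carrier := {x : g | ∀ h : H, ⁅(h : g), x⁆ = α h • x}
  add_mem' := fun {a b} ha hb h => by rw [lie_add, ha h, hb h, smul_add]
  zero_mem' := fun h => by rw [lie_zero, smul_zero]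
  smul_mem' := fun c x hx h => by rw [lie_smul, hx h]; exact smul_comm c (α h) x

/-- `α` is a root of `(g, H)`. -/
def IsRootOf (H : LieSubalgebra ℂ g) (α : Module.Dual ℂ H) : Prop :=
  α ≠ 0 ∧ wtSpace g H α ≠ ⊥

/-- A triangular decomposition `g = n₋ ⊕ h ⊕ n₊` of `g` relative to a Cartan
subalgebra `H`, given by a positive system `P` of roots. -/
structure TriangularData where
  H : LieSubalgebra ℂ g
  nPos : LieSubalgebra ℂ g
  nNeg : LieSubalgebra ℂ g
  isCartan : H.IsCartanSubalgebra
  P : Set (Module.Dual ℂ H)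
  pos_isRoot : ∀ α ∈ P, IsRootOf g H α
  pos_neg : ∀ α, IsRootOf g H α → (α ∈ P ↔ -α ∉ P)
  nPos_eq : nPos.toSubmodule = ⨆ α ∈ P, wtSpace g H α
  nNeg_eq : nNeg.toSubmodule = ⨆ α ∈ P, wtSpace g H (-α)
  triang : nNeg.toSubmodule ⊔ H.toSubmodule ⊔ nPos.toSubmodule = ⊤

variable {g}

/-- The simple roots of a positive system: the positive roots that are not sums of
two positive roots. -/
def TriangularData.simpleRoots (D : TriangularData g) : Set (Module.Dual ℂ D.H) :=
  {α | α ∈ D.P ∧ ¬∃ β ∈ D.P, ∃ γ ∈ D.P, α = β + γ}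

/-- `θ` is the highest root. -/
def TriangularData.IsHighestRoot (D : TriangularData g) (θ : Module.Dual ℂ D.H) : Prop :=
  θ ∈ D.P ∧ ∀ α ∈ D.P, ¬ IsRootOf g D.H (θ + α)

/-- `lam ∈ h*` is dominant integral: it takes nonnegative integer values on all
coroots (elements `hc = ⁅e, f⁆ ∈ [g_α, g_{-α}]` with `α hc = 2`, `α` positive). -/
def IsDominantIntegral (D : TriangularData g) (lam : Module.Dual ℂ D.H) : Prop :=
  ∀ α ∈ D.P, ∀ (e f : g) (hc : D.H), e ∈ wtSpace g D.H α → f ∈ wtSpace g D.H (-α) →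
    ⁅e, f⁆ = (hc : g) → α hc = 2 → ∃ n : ℕ, lam hc = (n : ℂ)

variable (g)

/-- The subspace `I(f) = n₊ ⊗ f ℂ[t] + (h ⊕ n₋) ⊗ t f ℂ[t]` of the current algebra. -/
def idealI (D : TriangularData g) (f : Polynomial ℂ) : Submodule ℂ (Polynomial ℂ ⊗[ℂ] g) :=
  Submodule.span ℂ
    ({z | ∃ x ∈ D.nPos, ∃ p : Polynomial ℂ, z = (f * p) ⊗ₜ[ℂ] x} ∪
     {z | ∃ x : g, x ∈ D.H.toSubmodule ⊔ D.nNeg.toSubmodule ∧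
        ∃ p : Polynomial ℂ, z = (X * f * p) ⊗ₜ[ℂ] x})

/-- The subspace `Σ_{α∈Δ₊∖Π} g_α ⊗ fℂ[t] + Σ_{α∈Π} g_α ⊗ tfℂ[t] +
Σ_{α∈Δ₊∖{θ}} g_{−α} ⊗ tfℂ[t] + g_{−θ} ⊗ t²fℂ[t] + h ⊗ tfℂ[t]` of the current
algebra (`θ` the highest root); for `f = 1` this is the subspace `K` of Lemma 4.2. -/
def bigK (D : TriangularData g) (θ : Module.Dual ℂ D.H) (f : Polynomial ℂ) :
    Submodule ℂ (Polynomial ℂ ⊗[ℂ] g) :=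
  Submodule.span ℂ
    ({z | ∃ α ∈ D.P, α ∉ D.simpleRoots ∧
        ∃ x ∈ wtSpace g D.H α, ∃ p : Polynomial ℂ, z = (f * p) ⊗ₜ[ℂ] x} ∪
     {z | ∃ α ∈ D.simpleRoots,
        ∃ x ∈ wtSpace g D.H α, ∃ p : Polynomial ℂ, z = (X * f * p) ⊗ₜ[ℂ] x} ∪
     {z | ∃ α ∈ D.P, α ≠ θ ∧
        ∃ x ∈ wtSpace g D.H (-α), ∃ p : Polynomial ℂ, z = (X * f * p) ⊗ₜ[ℂ] x} ∪
     {z | ∃ x ∈ wtSpace g D.H (-θ), ∃ p : Polynomial ℂ, z = (X ^ 2 * f * p) ⊗ₜ[ℂ] x} ∪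
     {z | ∃ x ∈ D.H, ∃ p : Polynomial ℂ, z = (X * f * p) ⊗ₜ[ℂ] x})

/-- The subspace of the current algebra corresponding to
`ñ₊ = (g ⊗ tℂ[t]) ⊕ (n₊ ⊗ 1)`. -/
def ntModel (D : TriangularData g) : Submodule ℂ (Polynomial ℂ ⊗[ℂ] g) :=
  Submodule.span ℂ
    ({z | ∃ (k : ℕ) (x : g), 1 ≤ k ∧ z = (X ^ k : Polynomial ℂ) ⊗ₜ[ℂ] x} ∪
     {z | ∃ x ∈ D.nPos, z = (1 : Polynomial ℂ) ⊗ₜ[ℂ] x})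

/-- A realization of the Lie algebra `ñ₊`: a Lie algebra `nt` together with an
injective morphism to the current algebra with range `(g ⊗ tℂ[t]) ⊕ (n₊ ⊗ 1)`. -/
structure NtAlg (D : TriangularData g) (nt : Type) [LieRing nt] [LieAlgebra ℂ nt] where
  ι : nt →ₗ⁅ℂ⁆ Polynomial ℂ ⊗[ℂ] g
  inj : Function.Injective ι
  range_eq : LinearMap.range (ι.toLinearMap) = ntModel g D

/-- Evaluation of the current algebra at a point `a ∈ ℂ`: `x ⊗ p(t) ↦ p(a) • x`. -/
def ev (a : ℂ) : (Polynomial ℂ ⊗[ℂ] g) →ₗ[ℂ] g :=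
  (TensorProduct.lid ℂ g).toLinearMap ∘ₗ
    (TensorProduct.map (Polynomial.aeval a).toLinearMap LinearMap.id)

/-- The canonical embedding of the current algebra `g ⊗ ℂ[t]` into the model
`ℤ →₀ g` of the loop algebra `g ⊗ ℂ[t,t⁻¹]` (sending `x ⊗ tᵏ` to `single k x`). -/
def toLoop : (Polynomial ℂ ⊗[ℂ] g) →ₗ[ℂ] (ℤ →₀ g) :=
  (Finsupp.lmapDomain g ℂ (Nat.cast : ℕ → ℤ)) ∘ₗ
    (TensorProduct.finsuppScalarLeft ℂ g ℕ).toLinearMap ∘ₗ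
    (TensorProduct.congr ((Polynomial.toFinsuppIsoAlg ℂ).toLinearEquiv.trans
      (AddMonoidAlgebra.coeffLinearEquiv ℂ)) (LinearEquiv.refl ℂ g)).toLinearMap

/-- A weight vector of `ñ₊` (viewed inside the current algebra): a nonzero element
`x ⊗ tᵏ` with `x` in `h` or in a root space. -/
def IsWeightVec (D : TriangularData g) (w : Polynomial ℂ ⊗[ℂ] g) : Prop :=
  w ≠ 0 ∧ ∃ (k : ℕ) (x : g), w = (X ^ k : Polynomial ℂ) ⊗ₜ[ℂ] x ∧
    (x ∈ D.H ∨ ∃ α, IsRootOf g D.H α ∧ x ∈ wtSpace g D.H α)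

/-- An element `z` of a Lie algebra `L` acts locally finitely on a module `V`. -/
def ActsLocallyFinitely (L : Type) [LieRing L] (V : Type) [AddCommGroup V] [Module ℂ V]
    [LieRingModule L V] (z : L) : Prop :=
  ∀ v : V, ∃ W : Submodule ℂ V, v ∈ W ∧ FiniteDimensional ℂ W ∧ ∀ w ∈ W, ⁅z, w⁆ ∈ W

/-- A realization of the affine Lie algebra `ĝ = (g ⊗ ℂ[t,t⁻¹]) ⊕ ℂK` (without
derivation): a Lie algebra `gh` with a linear equivalence `e` with the model space
`(ℤ →₀ g) × ℂ` such that `e (single p x, 0) = x ⊗ tᵖ`, `e (0,1) = K` is central, and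
`[x ⊗ tᵖ, y ⊗ t^q] = [x,y] ⊗ t^{p+q} + p δ_{p+q,0} κ(x,y) K`, `κ` the Killing form. -/
structure AffineAlg (gh : Type) [LieRing gh] [LieAlgebra ℂ gh] where
  e : ((ℤ →₀ g) × ℂ) ≃ₗ[ℂ] gh
  brkt : ∀ (p q : ℤ) (x y : g),
    ⁅e (Finsupp.single p x, 0), e (Finsupp.single q y, 0)⁆ =
      e (Finsupp.single (p + q) ⁅x, y⁆,
        if p + q = 0 then (p : ℂ) * killingForm ℂ g x y else 0)
  central : ∀ z : gh, ⁅e (0, 1), z⁆ = 0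

/-- A realization of the affine Kac–Moody algebra `t̃g = (g ⊗ ℂ[t,t⁻¹]) ⊕ ℂK ⊕ ℂd`:
as in `AffineAlg`, with moreover `e (0,0,1) = d` satisfying `[d, x ⊗ tᵖ] = p x ⊗ tᵖ`. -/
structure AffineAlgD (gt : Type) [LieRing gt] [LieAlgebra ℂ gt] where
  e : ((ℤ →₀ g) × ℂ × ℂ) ≃ₗ[ℂ] gt
  brkt : ∀ (p q : ℤ) (x y : g),
    ⁅e (Finsupp.single p x, 0, 0), e (Finsupp.single q y, 0, 0)⁆ =
      e (Finsupp.single (p + q) ⁅x, y⁆,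
        (if p + q = 0 then (p : ℂ) * killingForm ℂ g x y else 0), 0)
  central : ∀ z : gt, ⁅e (0, 1, 0), z⁆ = 0
  dBrkt : ∀ (p : ℤ) (x : g),
    ⁅e (0, 0, 1), e (Finsupp.single p x, 0, 0)⁆ = e (Finsupp.single p ((p : ℂ) • x), 0, 0)

variable {g}

/-- `V` is the irreducible highest weight `g`-module with highest weight `lam`:
it is irreducible and has a highest weight vector of weight `lam`. -/
structure IsHWModule (D : TriangularData g) (lam : Module.Dual ℂ D.H) (V : Type)
    [AddCommGroup V] [Module ℂ V] [LieRingModule g V] [LieModule ℂ g V] where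
  v₀ : V
  ne : v₀ ≠ 0
  hwN : ∀ x ∈ D.nPos, ⁅x, v₀⁆ = 0
  hwH : ∀ h : D.H, ⁅(h : g), v₀⁆ = lam h • v₀
  irred : IsSimpleOrder (LieSubmodule ℂ g V)

/-- `E` is the evaluation module `E(λ, a) = V₁ ⊗ ⋯ ⊗ V_m` over `ĝ`:
`(x ⊗ tᵏ) · (v₁ ⊗ ⋯ ⊗ v_m) = Σᵢ aᵢᵏ v₁ ⊗ ⋯ ⊗ (x · vᵢ) ⊗ ⋯ ⊗ v_m`, and `K` acts by `0`. -/
structure EvalModule {gh : Type} [LieRing gh] [LieAlgebra ℂ gh] (A : AffineAlg g gh)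
    {m : ℕ} (a : Fin m → ℂ) (V : Fin m → Type) [∀ i, AddCommGroup (V i)]
    [∀ i, Module ℂ (V i)] [∀ i, LieRingModule g (V i)] [∀ i, LieModule ℂ g (V i)]
    (E : Type) [AddCommGroup E] [Module ℂ E] [LieRingModule gh E] [LieModule ℂ gh E] where
  ψ : E ≃ₗ[ℂ] PiTensorProduct ℂ V
  act : ∀ (k : ℤ) (x : g) (v : ∀ i, V i),
    ⁅A.e (Finsupp.single k x, 0), ψ.symm (PiTensorProduct.tprod ℂ v)⁆ =
      ∑ i, (a i) ^ k • ψ.symm (PiTensorProduct.tprod ℂ (Function.update v i ⁅x, v i⁆))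
  kAct : ∀ w : E, ⁅A.e (0, 1), w⁆ = 0

/-- `V` is the `t̃g`-module `M[d] = Ind_{ĝ}^{t̃g} M` induced from a `ĝ`-module `M`.
As a vector space `M[d] = ℂ[d] ⊗ M` (modelled by `ℕ →₀ M`, `single n v = dⁿ ⊗ v`);
`d` shifts the degree and `ĝ` acts on `d⁰ ⊗ M` as on `M`.  These data determine the
`t̃g`-module structure uniquely. -/
structure IndModule {gh gt : Type} [LieRing gh] [LieAlgebra ℂ gh] [LieRing gt]
    [LieAlgebra ℂ gt] (T : AffineAlgD g gt) (A : AffineAlg g gh)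
    (M : Type) [AddCommGroup M] [Module ℂ M] [LieRingModule gh M]
    (V : Type) [AddCommGroup V] [Module ℂ V] [LieRingModule gt V] where
  φ : (ℕ →₀ M) ≃ₗ[ℂ] V
  dAct : ∀ (n : ℕ) (v : M),
    ⁅T.e (0, 0, 1), φ (Finsupp.single n v)⁆ = φ (Finsupp.single (n + 1) v)
  rest : ∀ (u : (ℤ →₀ g) × ℂ) (v : M),
    ⁅T.e (u.1, u.2, 0), φ (Finsupp.single 0 v)⁆ = φ (Finsupp.single 0 ⁅A.e u, v⁆)

attribute [local instance] LieRing.ofAssociativeRing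

/-- `S` is the `ñ₊`-module `S(η, λ, a) = ℂ v_η ⊗ L(λ₁) ⊗ ⋯ ⊗ L(λ_m)`:
`(x ⊗ p(t)) · (v₁ ⊗ ⋯ ⊗ v_m) = η(x ⊗ p(t)) (v₁ ⊗ ⋯ ⊗ v_m) + Σᵢ p(aᵢ) v₁ ⊗ ⋯ ⊗ (x vᵢ) ⊗ ⋯ ⊗ v_m`. -/
structure SModule {nt : Type} [LieRing nt] [LieAlgebra ℂ nt] {D : TriangularData g}
    (NT : NtAlg g D nt) (η : nt →ₗ⁅ℂ⁆ ℂ) {m : ℕ} (a : Fin m → ℂ)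
    (V : Fin m → Type) [∀ i, AddCommGroup (V i)] [∀ i, Module ℂ (V i)]
    [∀ i, LieRingModule g (V i)]
    (S : Type) [AddCommGroup S] [Module ℂ S] [LieRingModule nt S] where
  ψ : S ≃ₗ[ℂ] PiTensorProduct ℂ V
  act : ∀ (z : nt) (v : ∀ i, V i),
    ⁅z, ψ.symm (PiTensorProduct.tprod ℂ v)⁆ = η z • ψ.symm (PiTensorProduct.tprod ℂ v) +
      ∑ i, ψ.symm (PiTensorProduct.tprod ℂ (Function.update v i ⁅ev g (a i) (NT.ι z), v i⁆))

/-- `V` is the irreducible highest weight `ĝ`-module with highest weight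
`γ ∈ (h ⊕ ℂK)*`. -/
structure HWModuleAff {gh : Type} [LieRing gh] [LieAlgebra ℂ gh] (A : AffineAlg g gh)
    (D : TriangularData g) (γ : Module.Dual ℂ (↥D.H × ℂ)) (V : Type)
    [AddCommGroup V] [Module ℂ V] [LieRingModule gh V] [LieModule ℂ gh V] where
  v₀ : V
  ne : v₀ ≠ 0
  hwLoop : ∀ k : ℕ, 1 ≤ k → ∀ x : g, ⁅A.e (Finsupp.single (k : ℤ) x, 0), v₀⁆ = 0
  hwN : ∀ x ∈ D.nPos, ⁅A.e (Finsupp.single 0 x, 0), v₀⁆ = 0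
  hwH : ∀ (h : D.H) (c : ℂ), ⁅A.e (Finsupp.single 0 (h : g), c), v₀⁆ = γ (h, c) • v₀
  irred : IsSimpleOrder (LieSubmodule ℂ gh V)

/-- `W` is an irreducible Whittaker `ĝ`-module of type `η : ñ₊ → ℂ`. -/
structure WhittakerAff {gh : Type} [LieRing gh] [LieAlgebra ℂ gh] (A : AffineAlg g gh)
    {D : TriangularData g} {nt : Type} [LieRing nt] [LieAlgebra ℂ nt] (NT : NtAlg g D nt)
    (η : nt →ₗ⁅ℂ⁆ ℂ) (W : Type)
    [AddCommGroup W] [Module ℂ W] [LieRingModule gh W] [LieModule ℂ gh W] where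
  v₀ : W
  ne : v₀ ≠ 0
  wh : ∀ z : nt, ⁅A.e (toLoop g (NT.ι z), 0), v₀⁆ = η z • v₀
  irred : IsSimpleOrder (LieSubmodule ℂ gh W)

/-- `MS` is the induced `ĝ`-module `Ind_{ñ₊}^{ĝ} S`, characterized by its universal
property. -/
structure IndFromNt {gh : Type} [LieRing gh] [LieAlgebra ℂ gh] (A : AffineAlg g gh)
    {D : TriangularData g} {nt : Type} [LieRing nt] [LieAlgebra ℂ nt] (NT : NtAlg g D nt)
    (S : Type) [AddCommGroup S] [Module ℂ S] [LieRingModule nt S]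
    (MS : Type) [AddCommGroup MS] [Module ℂ MS] [LieRingModule gh MS]
    [LieModule ℂ gh MS] where
  ι₀ : S →ₗ[ℂ] MS
  compat : ∀ (z : nt) (s : S), ⁅A.e (toLoop g (NT.ι z), 0), ι₀ s⁆ = ι₀ ⁅z, s⁆
  univ : ∀ (W : Type) [AddCommGroup W] [Module ℂ W] [LieRingModule gh W]
    [LieModule ℂ gh W] (f : S →ₗ[ℂ] W),
    (∀ (z : nt) (s : S), ⁅A.e (toLoop g (NT.ι z), 0), f s⁆ = f ⁅z, s⁆) →
    ∃! F : MS →ₗ⁅ℂ,gh⁆ W, F.toLinearMap ∘ₗ ι₀ = f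

/-- `M0` is the universal Whittaker module `M(η) = Ind_{ñ₊}^{ĝ} ℂ_η`, characterized
by its universal property. -/
structure UnivWhittaker {gh : Type} [LieRing gh] [LieAlgebra ℂ gh] (A : AffineAlg g gh)
    {D : TriangularData g} {nt : Type} [LieRing nt] [LieAlgebra ℂ nt] (NT : NtAlg g D nt)
    (η : nt →ₗ⁅ℂ⁆ ℂ) (M0 : Type) [AddCommGroup M0] [Module ℂ M0] [LieRingModule gh M0]
    [LieModule ℂ gh M0] where
  u₀ : M0
  rel : ∀ z : nt, ⁅A.e (toLoop g (NT.ι z), 0), u₀⁆ = η z • u₀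
  univ : ∀ (W : Type) [AddCommGroup W] [Module ℂ W] [LieRingModule gh W]
    [LieModule ℂ gh W] (w : W),
    (∀ z : nt, ⁅A.e (toLoop g (NT.ι z), 0), w⁆ = η z • w) →
    ∃! F : M0 →ₗ⁅ℂ,gh⁆ W, F u₀ = w

variable (g)

/-- A bundled Lie module over a complex Lie algebra `L`. -/
structure LieModOf (L : Type) [LieRing L] [LieAlgebra ℂ L] : Type 1 where
  carrier : Type
  [ac : AddCommGroup carrier]
  [mo : Module ℂ carrier]
  [lrm : LieRingModule L carrier]
  [lm : LieModule ℂ L carrier]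

attribute [instance] LieModOf.ac LieModOf.mo LieModOf.lrm LieModOf.lm


section Statement11Aux

variable {g : Type} [LieRing g] [LieAlgebra ℂ g]

lemma ev_tmul (c : ℂ) (p : Polynomial ℂ) (x : g) :
    ev g c (p ⊗ₜ[ℂ] x) = p.eval c • x := by
  simp [ev, Polynomial.coe_aeval_eq_eval]

lemma ev_lie (c : ℂ) (u v : Polynomial ℂ ⊗[ℂ] g) :
    ev g c ⁅u, v⁆ = ⁅ev g c u, ev g c v⁆ := by
  induction u using TensorProduct.induction_on with
  | zero =>
    rw [show ⁅(0 : Polynomial ℂ ⊗[ℂ] g), v⁆ = 0 from zero_lie v]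
    simp
  | tmul p x =>
    induction v using TensorProduct.induction_on with
    | zero =>
      rw [show ⁅p ⊗ₜ[ℂ] x, (0 : Polynomial ℂ ⊗[ℂ] g)⁆ = 0 from lie_zero (p ⊗ₜ[ℂ] x)]
      simp
    | tmul q y =>
      rw [show ⁅p ⊗ₜ[ℂ] x, q ⊗ₜ[ℂ] y⁆ = (p * q) ⊗ₜ[ℂ] ⁅x, y⁆ from
        LieAlgebra.ExtendScalars.bracket_tmul ℂ (Polynomial ℂ) g g p q x y]
      simp [ev_tmul, smul_lie, lie_smul, smul_smul, mul_comm]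
    | add v1 v2 h1 h2 =>
      rw [show ⁅p ⊗ₜ[ℂ] x, v1 + v2⁆ = ⁅p ⊗ₜ[ℂ] x, v1⁆ + ⁅p ⊗ₜ[ℂ] x, v2⁆ from lie_add (p ⊗ₜ[ℂ] x) v1 v2,
        map_add, h1, h2, map_add, lie_add]
  | add u1 u2 h1 h2 =>
    rw [show ⁅u1 + u2, v⁆ = ⁅u1, v⁆ + ⁅u2, v⁆ from add_lie u1 u2 v,
      map_add, h1, h2, map_add, add_lie]

variable {m : ℕ}

/-- Lagrange-type polynomial: vanishes at `0` and at `a j` for `j ≠ i`, value `1` at `a i`. -/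
def lagM (a : Fin m → ℂ) (i : Fin m) : Polynomial ℂ :=
  C ((a i * ∏ j ∈ Finset.univ.erase i, (a i - a j))⁻¹) *
    (X * ∏ j ∈ Finset.univ.erase i, (X - C (a j)))

lemma X_dvd_lagM (a : Fin m → ℂ) (i : Fin m) : X ∣ lagM a i :=
  ⟨C ((a i * ∏ j ∈ Finset.univ.erase i, (a i - a j))⁻¹) *
    ∏ j ∈ Finset.univ.erase i, (X - C (a j)), by rw [lagM]; ring⟩

lemma lagM_eval_self (a : Fin m → ℂ) (ha : ∀ i, a i ≠ 0) (hinj : Function.Injective a)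
    (i : Fin m) : (lagM a i).eval (a i) = 1 := by
  have hne : a i * ∏ j ∈ Finset.univ.erase i, (a i - a j) ≠ 0 := by
    refine mul_ne_zero (ha i) (Finset.prod_ne_zero_iff.2 fun j hj => ?_)
    exact sub_ne_zero.2 fun h => (Finset.mem_erase.1 hj).1 (hinj h.symm)
  rw [lagM, Polynomial.eval_mul, Polynomial.eval_C, Polynomial.eval_mul,
    Polynomial.eval_X, Polynomial.eval_prod]
  have hpr : ∏ j ∈ Finset.univ.erase i, Polynomial.eval (a i) (X - C (a j)) =
      ∏ j ∈ Finset.univ.erase i, (a i - a j) :=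
    Finset.prod_congr rfl fun j _ => by simp
  rw [hpr]
  exact inv_mul_cancel₀ hne

lemma lagM_eval_ne (a : Fin m → ℂ) {i j : Fin m} (h : j ≠ i) :
    (lagM a i).eval (a j) = 0 := by
  rw [lagM]
  simp only [Polynomial.eval_mul, Polynomial.eval_prod]
  have h0 : ∏ k ∈ Finset.univ.erase i, Polynomial.eval (a j) (X - C (a k)) = 0 :=
    Finset.prod_eq_zero (Finset.mem_erase.2 ⟨h, Finset.mem_univ j⟩) (by simp)
  rw [h0]; ring

lemma lagM_eval_zero (a : Fin m → ℂ) (i : Fin m) : (lagM a i).eval 0 = 0 := by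
  obtain ⟨r, hr⟩ := X_dvd_lagM a i
  simp [hr]

lemma sub_mul_lagM (a : Fin m → ℂ) (i : Fin m) :
    (X - C (a i)) * lagM a i =
      C ((a i * ∏ j ∈ Finset.univ.erase i, (a i - a j))⁻¹) *
        (X * ∏ j, (X - C (a j))) := by
  rw [lagM, ← Finset.mul_prod_erase Finset.univ _ (Finset.mem_univ i)]
  ring

lemma lagM_interp (a : Fin m → ℂ) (ha : ∀ i, a i ≠ 0) (hinj : Function.Injective a)
    (p : Polynomial ℂ) :
    ∃ s : Polynomial ℂ, X * p =
      (∑ i, C (a i * p.eval (a i)) * lagM a i) + X * (∏ j, (X - C (a j))) * s := by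
  set q : Polynomial ℂ := X * p - ∑ i, C (a i * p.eval (a i)) * lagM a i with hq
  have hdvd : X * (∏ j, (X - C (a j))) ∣ q := by
    have hv : Function.Injective (Fin.cons (0 : ℂ) a : Fin (m + 1) → ℂ) :=
      Fin.cons_injective_iff.2 ⟨by rintro ⟨i, hi⟩; exact ha i hi, hinj⟩
    have hprod : X * (∏ j, (X - C (a j))) =
        ∏ k : Fin (m + 1), (X - C (Fin.cons (0 : ℂ) a k)) := by
      rw [Fin.prod_univ_succ]
      simp
    rw [hprod]
    refine Fintype.prod_dvd_of_coprime
      (Polynomial.pairwise_coprime_X_sub_C hv) fun k => ?_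
    rw [Polynomial.dvd_iff_isRoot]
    rcases Fin.eq_zero_or_eq_succ k with rfl | ⟨j, rfl⟩
    · rw [Fin.cons_zero, hq]
      simp [Polynomial.IsRoot, Polynomial.eval_finset_sum, lagM_eval_zero]
    · rw [Fin.cons_succ, hq]
      simp only [Polynomial.IsRoot, Polynomial.eval_sub, Polynomial.eval_mul,
        Polynomial.eval_X, Polynomial.eval_finset_sum, Polynomial.eval_C]
      rw [Finset.sum_eq_single j]
      · rw [lagM_eval_self a ha hinj, mul_one, sub_self]
      · intro i _ hij
        rw [lagM_eval_ne a (Ne.symm hij), mul_zero]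
      · exact fun h => absurd (Finset.mem_univ j) h
  obtain ⟨s, hs⟩ := hdvd
  rw [hq] at hs
  exact ⟨s, by linear_combination hs⟩

variable {D : TriangularData g}

lemma mem_idealI₁ {x : g} (hx : x ∈ D.nPos) (h p : Polynomial ℂ) :
    (h * p) ⊗ₜ[ℂ] x ∈ idealI g D h :=
  Submodule.subset_span (Or.inl ⟨x, hx, p, rfl⟩)

lemma mem_idealI₂ {x : g} (hx : x ∈ D.H.toSubmodule ⊔ D.nNeg.toSubmodule)
    (h p : Polynomial ℂ) :
    (X * h * p) ⊗ₜ[ℂ] x ∈ idealI g D h :=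
  Submodule.subset_span (Or.inr ⟨x, hx, p, rfl⟩)

lemma idealI_mul_le (f : Polynomial ℂ) : idealI g D (X * f) ≤ idealI g D X := by
  rw [idealI, Submodule.span_le]
  rintro z (⟨x, hx, p, rfl⟩ | ⟨x, hx, p, rfl⟩)
  · rw [show X * f * p = X * (f * p) by ring]
    exact mem_idealI₁ hx X (f * p)
  · rw [show X * (X * f) * p = X * X * (f * p) by ring]
    exact mem_idealI₂ hx X (f * p)

lemma ev_idealI {h : Polynomial ℂ} {c : ℂ} (hc : h.eval c = 0) :
    ∀ w ∈ idealI g D h, ev g c w = 0 := by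
  intro w hw
  rw [idealI] at hw
  induction hw using Submodule.span_induction with
  | mem z hz =>
    obtain (⟨x, hx, p, rfl⟩ | ⟨x, hx, p, rfl⟩) := hz <;> simp [ev_tmul, hc]
  | zero => simp
  | add x y _ _ h1 h2 => simp [h1, h2]
  | smul c x _ h1 => simp [h1]

lemma X_mul_tmul_mem_ntModel (q : Polynomial ℂ) (x : g) :
    (X * q) ⊗ₜ[ℂ] x ∈ ntModel g D := by
  induction q using Polynomial.induction_on' with
  | add p r hp hr => rw [mul_add, TensorProduct.add_tmul]; exact add_mem hp hr
  | monomial n c =>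
    have h1 : X * (monomial n c : Polynomial ℂ) = C c * X ^ (n + 1) := by
      rw [← Polynomial.C_mul_X_pow_eq_monomial]; ring
    rw [h1, ← Polynomial.smul_eq_C_mul, ← TensorProduct.smul_tmul']
    exact Submodule.smul_mem _ _
      (Submodule.subset_span (Or.inl ⟨n + 1, x, by omega, rfl⟩))

lemma C_mul_tmul (c : ℂ) (p : Polynomial ℂ) (x : g) :
    (C c * p) ⊗ₜ[ℂ] x = p ⊗ₜ[ℂ] (c • x) := by
  rw [← Polynomial.smul_eq_C_mul, TensorProduct.smul_tmul]

lemma ev_sum_lagM (a : Fin m → ℂ) (ha : ∀ i, a i ≠ 0) (hinj : Function.Injective a)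
    (x y : Fin m → g) (j : Fin m) :
    ev g (a j) (∑ i, (lagM a i ⊗ₜ[ℂ] x i + (X * lagM a i) ⊗ₜ[ℂ] y i)) =
      x j + a j • y j := by
  rw [map_sum, Finset.sum_eq_single j]
  · simp [ev_tmul, Polynomial.eval_mul, lagM_eval_self a ha hinj]
  · intro i _ hij
    simp [ev_tmul, Polynomial.eval_mul, lagM_eval_ne a (Ne.symm hij)]
  · exact fun h => absurd (Finset.mem_univ j) h

lemma ev_sum_lagM' (a : Fin m → ℂ) (ha : ∀ i, a i ≠ 0) (hinj : Function.Injective a)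
    (b : Fin m → ℂ) (x y : Fin m → g) (j : Fin m) :
    ev g (a j) (∑ i, (lagM a i ⊗ₜ[ℂ] x i + (C (b i) * (X * lagM a i)) ⊗ₜ[ℂ] y i)) =
      x j + (b j * a j) • y j := by
  rw [map_sum, Finset.sum_eq_single j]
  · simp [ev_tmul, Polynomial.eval_mul, lagM_eval_self a ha hinj]
  · intro i _ hij
    simp [ev_tmul, Polynomial.eval_mul, lagM_eval_ne a (Ne.symm hij)]
  · exact fun h => absurd (Finset.mem_univ j) h

lemma idealI_X_decomp (a : Fin m → ℂ) (ha : ∀ i, a i ≠ 0)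
    (hinj : Function.Injective a) {w : Polynomial ℂ ⊗[ℂ] g} (hw : w ∈ idealI g D X) :
    ∃ x y : Fin m → g, (∀ i, x i ∈ D.nPos) ∧
      (∀ i, y i ∈ D.H.toSubmodule ⊔ D.nNeg.toSubmodule) ∧
      w - ∑ i, (lagM a i ⊗ₜ[ℂ] x i + (X * lagM a i) ⊗ₜ[ℂ] y i)
        ∈ idealI g D (X * ∏ j, (X - C (a j))) := by
  rw [idealI] at hw
  induction hw using Submodule.span_induction with
  | mem z hz =>
    obtain (⟨x, hx, p, rfl⟩ | ⟨x, hx, p, rfl⟩) := hz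
    · obtain ⟨s, hs⟩ := lagM_interp a ha hinj p
      refine ⟨fun i => (a i * p.eval (a i)) • x, 0,
        fun i => D.nPos.toSubmodule.smul_mem _ hx, fun i => Submodule.zero_mem _, ?_⟩
      have hrw : (X * p) ⊗ₜ[ℂ] x =
          (∑ i, lagM a i ⊗ₜ[ℂ] ((a i * p.eval (a i)) • x)) +
          (X * (∏ j, (X - C (a j))) * s) ⊗ₜ[ℂ] x := by
        rw [hs, TensorProduct.add_tmul, TensorProduct.sum_tmul]
        congr 1
        exact Finset.sum_congr rfl fun i _ => C_mul_tmul _ _ _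
      rw [hrw]
      simp only [Pi.zero_apply, TensorProduct.tmul_zero, add_zero, add_sub_cancel_left]
      exact mem_idealI₁ hx _ s
    · obtain ⟨s, hs⟩ := lagM_interp a ha hinj p
      refine ⟨0, fun i => (a i * p.eval (a i)) • x,
        fun i => D.nPos.toSubmodule.zero_mem,
        fun i => Submodule.smul_mem _ _ hx, ?_⟩
      have h2 : X * X * p = (∑ i, C (a i * p.eval (a i)) * (X * lagM a i)) +
          X * (X * (∏ j, (X - C (a j)))) * s := by
        calc X * X * p = X * (X * p) := by ring
        _ = X * ((∑ i, C (a i * p.eval (a i)) * lagM a i) +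
              X * (∏ j, (X - C (a j))) * s) := by rw [hs]
        _ = _ := by
            rw [mul_add, Finset.mul_sum]
            congr 1
            · exact Finset.sum_congr rfl fun i _ => by ring
            · ring
      have hrw : (X * X * p) ⊗ₜ[ℂ] x =
          (∑ i, (X * lagM a i) ⊗ₜ[ℂ] ((a i * p.eval (a i)) • x)) +
          (X * (X * (∏ j, (X - C (a j)))) * s) ⊗ₜ[ℂ] x := by
        rw [h2, TensorProduct.add_tmul, TensorProduct.sum_tmul]
        congr 1
        exact Finset.sum_congr rfl fun i _ => C_mul_tmul _ _ _
      rw [hrw]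
      simp only [Pi.zero_apply, TensorProduct.tmul_zero, zero_add, add_sub_cancel_left]
      exact mem_idealI₂ hx _ s
  | zero =>
    exact ⟨0, 0, fun i => Submodule.zero_mem _, fun i => Submodule.zero_mem _, by
      simp⟩
  | add w1 w2 hw1 hw2 ih1 ih2 =>
    obtain ⟨x1, y1, hx1, hy1, hm1⟩ := ih1
    obtain ⟨x2, y2, hx2, hy2, hm2⟩ := ih2
    refine ⟨x1 + x2, y1 + y2, fun i => Submodule.add_mem _ (hx1 i) (hx2 i),
      fun i => Submodule.add_mem _ (hy1 i) (hy2 i), ?_⟩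
    have hsum : ∑ i, (lagM a i ⊗ₜ[ℂ] ((x1 + x2) i) + (X * lagM a i) ⊗ₜ[ℂ] ((y1 + y2) i)) =
        (∑ i, (lagM a i ⊗ₜ[ℂ] x1 i + (X * lagM a i) ⊗ₜ[ℂ] y1 i)) +
        (∑ i, (lagM a i ⊗ₜ[ℂ] x2 i + (X * lagM a i) ⊗ₜ[ℂ] y2 i)) := by
      rw [← Finset.sum_add_distrib]
      refine Finset.sum_congr rfl fun i _ => ?_
      simp only [Pi.add_apply, TensorProduct.tmul_add]
      abel
    rw [hsum, show w1 + w2 -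
        ((∑ i, (lagM a i ⊗ₜ[ℂ] x1 i + (X * lagM a i) ⊗ₜ[ℂ] y1 i)) +
         (∑ i, (lagM a i ⊗ₜ[ℂ] x2 i + (X * lagM a i) ⊗ₜ[ℂ] y2 i))) =
        (w1 - ∑ i, (lagM a i ⊗ₜ[ℂ] x1 i + (X * lagM a i) ⊗ₜ[ℂ] y1 i)) +
        (w2 - ∑ i, (lagM a i ⊗ₜ[ℂ] x2 i + (X * lagM a i) ⊗ₜ[ℂ] y2 i)) by abel]
    exact Submodule.add_mem _ hm1 hm2
  | smul c w hw ih =>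
    obtain ⟨x, y, hx, hy, hm⟩ := ih
    refine ⟨c • x, c • y, fun i => Submodule.smul_mem _ _ (hx i),
      fun i => Submodule.smul_mem _ _ (hy i), ?_⟩
    have hsum : ∑ i, (lagM a i ⊗ₜ[ℂ] ((c • x) i) + (X * lagM a i) ⊗ₜ[ℂ] ((c • y) i)) =
        c • ∑ i, (lagM a i ⊗ₜ[ℂ] x i + (X * lagM a i) ⊗ₜ[ℂ] y i) := by
      rw [Finset.smul_sum]
      refine Finset.sum_congr rfl fun i _ => ?_
      simp only [Pi.smul_apply, TensorProduct.tmul_smul, smul_add]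
    rw [hsum, ← smul_sub]
    exact Submodule.smul_mem _ _ hm

end Statement11Aux

/-- the map `x ⊗ p(t) ↦ (x ⊗ p(t) mod I(t), p(a₁) x, …, p(a_m) x)`
induces a Lie algebra isomorphism `ñ₊ / I(tf) ≅ (ñ₊/I(t)) ⊕ g ⊕ ⋯ ⊕ g`.
Here the quotient `ñ₊/I(t)` is represented by any Lie algebra `Q` with a surjective
morphism `π : ñ₊ → Q` whose kernel is `I(t)`, and the claim is that the combined
map is a Lie algebra morphism in each coordinate, is surjective onto
`Q × gᵐ`, and has kernel exactly `I(tf)`. -/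
theorem statement11 (g : Type) [LieRing g] [LieAlgebra ℂ g] [FiniteDimensional ℂ g]
    [LieAlgebra.IsSimple ℂ g] (D : TriangularData g)
    (nt : Type) [LieRing nt] [LieAlgebra ℂ nt] (NT : NtAlg g D nt)
    (m : ℕ) (a : Fin m → ℂ) (ha : ∀ i, a i ≠ 0) (hinj : Function.Injective a)
    (f : Polynomial ℂ) (hf : f = ∏ i, (X - C (a i)))
    (Q : Type) [LieRing Q] [LieAlgebra ℂ Q] (π : nt →ₗ⁅ℂ⁆ Q)
    (hπsurj : Function.Surjective π)
    (hπker : ∀ z : nt, π z = 0 ↔ NT.ι z ∈ idealI g D X) :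
    Function.Surjective
      (fun z : nt => ((π z, fun i => ev g (a i) (NT.ι z)) : Q × (Fin m → g))) ∧
    (∀ z w : nt, ∀ i, ev g (a i) (NT.ι ⁅z, w⁆) =
      ⁅ev g (a i) (NT.ι z), ev g (a i) (NT.ι w)⁆) ∧
    (∀ z : nt, (π z = 0 ∧ ∀ i, ev g (a i) (NT.ι z) = 0) ↔
      NT.ι z ∈ idealI g D (X * f)) := by
  subst hf
  have hfeval : ∀ j, (∏ i, (X - C (a i))).eval (a j) = 0 := fun j => by
    rw [Polynomial.eval_prod]
    exact Finset.prod_eq_zero (Finset.mem_univ j) (by simp)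
  have hXfeval : ∀ j, (X * ∏ i, (X - C (a i))).eval (a j) = 0 := fun j => by
    rw [Polynomial.eval_mul, hfeval j, mul_zero]
  refine ⟨?_, ?_, ?_⟩
  · rintro ⟨q, c⟩
    obtain ⟨z₀, hz₀⟩ := hπsurj q
    have hdec : ∀ j, ∃ u v : g, u ∈ D.nPos ∧ v ∈ D.H.toSubmodule ⊔ D.nNeg.toSubmodule ∧
        v + u = c j - ev g (a j) (NT.ι z₀) := by
      intro j
      have hmem : c j - ev g (a j) (NT.ι z₀) ∈
          D.nNeg.toSubmodule ⊔ D.H.toSubmodule ⊔ D.nPos.toSubmodule := by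
        rw [D.triang]; exact Submodule.mem_top
      obtain ⟨v, hv, u, hu, huv⟩ := Submodule.mem_sup.1 hmem
      refine ⟨u, v, by exact hu, ?_, huv⟩
      rwa [sup_comm] at hv
    choose u v hu hv huv using hdec
    set U : Polynomial ℂ ⊗[ℂ] g :=
      ∑ j, (lagM a j ⊗ₜ[ℂ] u j + (C ((a j)⁻¹) * (X * lagM a j)) ⊗ₜ[ℂ] v j) with hU
    have hUnt : U ∈ ntModel g D := by
      refine Submodule.sum_mem _ fun j _ => Submodule.add_mem _ ?_ ?_
      · obtain ⟨r, hr⟩ := X_dvd_lagM a j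
        rw [hr]; exact X_mul_tmul_mem_ntModel r (u j)
      · obtain ⟨r, hr⟩ := X_dvd_lagM a j
        rw [hr, show C ((a j)⁻¹) * (X * (X * r)) = X * (C ((a j)⁻¹) * (X * r)) by ring]
        exact X_mul_tmul_mem_ntModel _ (v j)
    have hUI : U ∈ idealI g D X := by
      refine Submodule.sum_mem _ fun j _ => Submodule.add_mem _ ?_ ?_
      · obtain ⟨r, hr⟩ := X_dvd_lagM a j
        rw [hr]; exact mem_idealI₁ (hu j) X r
      · obtain ⟨r, hr⟩ := X_dvd_lagM a j
        rw [hr, show C ((a j)⁻¹) * (X * (X * r)) = X * X * (C ((a j)⁻¹) * r) by ring]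
        exact mem_idealI₂ (hv j) X _
    have hUrange : U ∈ LinearMap.range NT.ι.toLinearMap := by rw [NT.range_eq]; exact hUnt
    obtain ⟨z', hz'⟩ := hUrange
    have hz'' : NT.ι z' = U := hz'
    refine ⟨z₀ + z', ?_⟩
    have hπz' : π z' = 0 := (hπker z').2 (by rw [hz'']; exact hUI)
    have hev' : ∀ j, ev g (a j) (NT.ι z') = u j + v j := by
      intro j
      rw [hz'', hU, ev_sum_lagM' a ha hinj (fun i => (a i)⁻¹) u v j,
        inv_mul_cancel₀ (ha j), one_smul]
    show ((π (z₀ + z'), fun i => ev g (a i) (NT.ι (z₀ + z'))) : Q × (Fin m → g)) = (q, c)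
    simp only [Prod.mk.injEq]
    constructor
    · rw [map_add, hz₀, hπz', add_zero]
    · funext j
      rw [map_add, map_add, hev' j, add_comm (u j) (v j), huv j]
      abel
  · intro z w i
    rw [LieHom.map_lie]
    exact ev_lie (a i) (NT.ι z) (NT.ι w)
  · intro z
    constructor
    · rintro ⟨h0, hev⟩
      have hI : NT.ι z ∈ idealI g D X := (hπker z).1 h0
      obtain ⟨x, y, hx, hy, hmem⟩ := idealI_X_decomp a ha hinj hI
      have h0j : ∀ j, x j + a j • y j = 0 := by
        intro j
        have h1 : ev g (a j)
            (NT.ι z - ∑ i, (lagM a i ⊗ₜ[ℂ] x i + (X * lagM a i) ⊗ₜ[ℂ] y i)) = 0 :=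
          ev_idealI (hXfeval j) _ hmem
        rw [map_sub, hev j, ev_sum_lagM a ha hinj x y j, zero_sub, neg_eq_zero] at h1
        exact h1
      have hyP : ∀ j, y j ∈ D.nPos := by
        intro j
        have h3 : a j • y j = -(x j) :=
          eq_neg_iff_add_eq_zero.2 (by rw [add_comm]; exact h0j j)
        have h4 : y j = (a j)⁻¹ • (-(x j)) := by
          rw [← h3, smul_smul, inv_mul_cancel₀ (ha j), one_smul]
        rw [h4]
        exact Submodule.smul_mem D.nPos.toSubmodule _ (Submodule.neg_mem _ (hx j))
      have hterm : ∀ j, lagM a j ⊗ₜ[ℂ] x j + (X * lagM a j) ⊗ₜ[ℂ] y j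
          ∈ idealI g D (X * ∏ i, (X - C (a i))) := by
        intro j
        have hxj : x j = -(a j • y j) := eq_neg_iff_add_eq_zero.2 (h0j j)
        have heq : lagM a j ⊗ₜ[ℂ] x j + (X * lagM a j) ⊗ₜ[ℂ] y j
            = ((X * ∏ i, (X - C (a i))) *
               C ((a j * ∏ k ∈ Finset.univ.erase j, (a j - a k))⁻¹)) ⊗ₜ[ℂ] y j := by
          rw [hxj, ← neg_smul, ← TensorProduct.smul_tmul, Polynomial.smul_eq_C_mul,
            ← TensorProduct.add_tmul]
          congr 1
          rw [map_neg]
          linear_combination sub_mul_lagM a j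
        rw [heq]
        exact mem_idealI₁ (hyP j) _ _
      have hsplit : NT.ι z =
          (NT.ι z - ∑ i, (lagM a i ⊗ₜ[ℂ] x i + (X * lagM a i) ⊗ₜ[ℂ] y i))
          + ∑ i, (lagM a i ⊗ₜ[ℂ] x i + (X * lagM a i) ⊗ₜ[ℂ] y i) := by abel
      rw [hsplit]
      exact Submodule.add_mem _ hmem (Submodule.sum_mem _ fun j _ => hterm j)
    · intro hmem
      exact ⟨(hπker z).2 (idealI_mul_le _ hmem), fun i => ev_idealI (hXfeval i) _ hmem⟩

end AffinePaper
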